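/- arXiv:math/0301013 — 4 statements merged into one kernel-verified Lean document; each statement's English description precedes it below -/
import Mathlib

section
/- Let H be the subgroup of S_n given as the image of the embedding e_φ: S_1^{j_1} × ⋯ × S_n^{j_n} → S_n associated to a partition of {1,…,n} into j_i blocks of size i (with Σ i·j_i = n). Then the normalizer N(H) of H in S_n is isomorphic to ∏_i (S_i ≀ S_{j_i}) (the product of wreath products), and the quotient N(H)/H is isomorphic to S_{j_1} × S_{j_2} × ⋯ × S_{j_n}. -/
/-- The type of `Σᵢ i·jᵢ` elements, partitioned into `j i` blocks of size `i`
(here the block sizes are `i+1` for `i : Fin N`, so that all sizes are positive). -/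
def BlockType (N : ℕ) (j : Fin N → ℕ) : Type :=
  Σ i : Fin N, Fin (j i) × Fin (i.1 + 1)

/-- The subgroup `H = Im(e_φ) ≅ ∏ᵢ Sᵢ^{jᵢ}` of the symmetric group of the partitioned set,
consisting of the permutations preserving each block. -/
def blockSubgroup (N : ℕ) (j : Fin N → ℕ) : Subgroup (Equiv.Perm (BlockType N j)) where
  carrier := {σ | ∀ b : BlockType N j, (σ b).1 = b.1 ∧ ((σ b).2.1 : ℕ) = b.2.1}
  one_mem' := by intro b; simp
  mul_mem' := by
    intro σ τ hσ hτ b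
    have h1 := hτ b
    have h2 := hσ (τ b)
    simp only [Equiv.Perm.mul_apply]
    exact ⟨h2.1.trans h1.1, h2.2.trans h1.2⟩
  inv_mem' := by
    intro σ hσ b
    obtain ⟨h1, h2⟩ := hσ (σ⁻¹ b)
    rw [show σ (σ⁻¹ b) = b from σ.apply_symm_apply b] at h1 h2
    exact ⟨h1.symm, h2.symm⟩

/-- The permutation action of `Equiv.Perm ι` on `ι → G` by automorphisms. -/
def permMulAut (G ι : Type) [Group G] : Equiv.Perm ι →* MulAut (ι → G) where
  toFun σ :=
    { toFun := fun f => f ∘ ⇑σ⁻¹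
      invFun := fun f => f ∘ ⇑σ
      left_inv := fun f => by funext i; simp
      right_inv := fun f => by funext i; simp
      map_mul' := fun f g => rfl }
  map_one' := by ext f i; simp
  map_mul' := fun σ τ => by ext f i; simp


namespace BlockNormalizer

open Equiv SemidirectProduct

variable {N : ℕ} {j : Fin N → ℕ}

instance : DecidableEq (BlockType N j) :=
  inferInstanceAs (DecidableEq (Σ i : Fin N, Fin (j i) × Fin (i.1 + 1)))

/-- extensionality for `BlockType` via `ℕ`-valued components -/
theorem blockext {b b' : BlockType N j} (h1 : b.1 = b'.1)
    (h2 : (b.2.1 : ℕ) = b'.2.1) (h3 : (b.2.2 : ℕ) = b'.2.2) : b = b' := by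
  obtain ⟨i, k, x⟩ := b
  obtain ⟨i', k', x'⟩ := b'
  subst h1
  simp only at h2 h3
  rw [Fin.ext_iff.mpr h2, Fin.ext_iff.mpr h3]

/-- the "same block" relation -/
def E (b b' : BlockType N j) : Prop := b'.1 = b.1 ∧ ((b'.2.1 : ℕ) = b.2.1)

theorem swap_mem {b b' : BlockType N j} (h : E b b') :
    Equiv.swap b b' ∈ blockSubgroup N j := by
  intro c
  rcases eq_or_ne c b with rfl | hb
  · rw [Equiv.swap_apply_left]; exact h
  rcases eq_or_ne c b' with rfl | hb'
  · rw [Equiv.swap_apply_right]; exact ⟨h.1.symm, h.2.symm⟩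
  · rw [Equiv.swap_apply_of_ne_of_ne hb hb']; exact ⟨rfl, rfl⟩

theorem norm_E {σ : Equiv.Perm (BlockType N j)}
    (hσ : σ ∈ (Subgroup.normalizer (blockSubgroup N j : Set (Equiv.Perm (BlockType N j))))) {b b' : BlockType N j}
    (h : E b b') : E (σ b) (σ b') := by
  have h2 : σ * Equiv.swap b b' * σ⁻¹ ∈ blockSubgroup N j :=
    (Subgroup.mem_normalizer_iff.mp hσ _).mp (swap_mem h)
  have h4 : (σ * Equiv.swap b b' * σ⁻¹) (σ b) = σ b' := by
    simp [Equiv.Perm.mul_apply]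
  have h3 := h2 (σ b)
  rw [h4] at h3
  exact h3

theorem norm_E' {σ : Equiv.Perm (BlockType N j)}
    (hσ : σ ∈ (Subgroup.normalizer (blockSubgroup N j : Set (Equiv.Perm (BlockType N j))))) {b b' : BlockType N j}
    (h : E (σ b) (σ b')) : E b b' := by
  have := norm_E (Subgroup.inv_mem _ hσ) h
  simpa using this

theorem fst_eq {σ : Equiv.Perm (BlockType N j)}
    (hσ : σ ∈ (Subgroup.normalizer (blockSubgroup N j : Set (Equiv.Perm (BlockType N j))))) (b : BlockType N j) :
    (σ b).1 = b.1 := by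
  have key : ∀ x : Fin (b.1.1 + 1), E (σ b) (σ ⟨b.1, b.2.1, x⟩) := by
    intro x
    refine norm_E hσ ⟨rfl, rfl⟩
  have keyinv : ∀ x : Fin ((σ b).1.1 + 1),
      E (σ⁻¹ (σ b)) (σ⁻¹ ⟨(σ b).1, (σ b).2.1, x⟩) := by
    intro x
    exact norm_E (Subgroup.inv_mem _ hσ) ⟨rfl, rfl⟩
  -- injective map forward
  set u : Fin (b.1.1 + 1) → Fin ((σ b).1.1 + 1) := fun x =>
    Fin.cast (by rw [(key x).1]) (σ ⟨b.1, b.2.1, x⟩).2.2 with hu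
  have hu_inj : Function.Injective u := by
    intro x x' hxx
    have hval : ((σ (⟨b.1, b.2.1, x⟩ : BlockType N j)).2.2 : ℕ)
        = ((σ (⟨b.1, b.2.1, x'⟩ : BlockType N j)).2.2 : ℕ) := by
      simpa [hu] using congrArg Fin.val hxx
    have heq : σ (⟨b.1, b.2.1, x⟩ : BlockType N j)
        = σ (⟨b.1, b.2.1, x'⟩ : BlockType N j) :=
      blockext ((key x).1.trans (key x').1.symm)
        ((key x).2.trans (key x').2.symm) hval
    have := σ.injective heq
    exact Fin.ext (congrArg (fun c : BlockType N j => (c.2.2 : ℕ)) this)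
  -- injective map backward
  set v : Fin ((σ b).1.1 + 1) → Fin (b.1.1 + 1) := fun x =>
    Fin.cast (by rw [(keyinv x).1]; simp)
      (σ⁻¹ ⟨(σ b).1, (σ b).2.1, x⟩).2.2 with hv
  have hv_inj : Function.Injective v := by
    intro x x' hxx
    have hval : ((σ⁻¹ (⟨(σ b).1, (σ b).2.1, x⟩ : BlockType N j)).2.2 : ℕ)
        = ((σ⁻¹ (⟨(σ b).1, (σ b).2.1, x'⟩ : BlockType N j)).2.2 : ℕ) := by
      simpa [hv] using congrArg Fin.val hxx
    have heq : σ⁻¹ (⟨(σ b).1, (σ b).2.1, x⟩ : BlockType N j)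
        = σ⁻¹ (⟨(σ b).1, (σ b).2.1, x'⟩ : BlockType N j) :=
      blockext ((keyinv x).1.trans (keyinv x').1.symm)
        ((keyinv x).2.trans (keyinv x').2.symm) hval
    have := σ⁻¹.injective heq
    exact Fin.ext (congrArg (fun c : BlockType N j => (c.2.2 : ℕ)) this)
  have c1 : b.1.1 + 1 ≤ (σ b).1.1 + 1 := by
    simpa using Fintype.card_le_of_injective u hu_inj
  have c2 : (σ b).1.1 + 1 ≤ b.1.1 + 1 := by
    simpa using Fintype.card_le_of_injective v hv_inj
  exact Fin.ext (by omega)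

/-- The big permutation associated to an element of the product of wreath products. -/
def bigPerm (p : ∀ i : Fin N,
    (Fin (j i) → Equiv.Perm (Fin (i.1 + 1))) ⋊[permMulAut _ _] Equiv.Perm (Fin (j i))) :
    Equiv.Perm (BlockType N j) where
  toFun b := ⟨b.1, (p b.1).right b.2.1, (p b.1).left ((p b.1).right b.2.1) b.2.2⟩
  invFun b := ⟨b.1, (p b.1).right⁻¹ b.2.1, ((p b.1).left b.2.1)⁻¹ b.2.2⟩
  left_inv := by
    intro b
    obtain ⟨i, k, x⟩ := b
    simp; rfl
  right_inv := by
    intro b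
    obtain ⟨i, k, x⟩ := b
    simp; rfl

theorem bigPerm_apply_mk (p : ∀ i : Fin N,
    (Fin (j i) → Equiv.Perm (Fin (i.1 + 1))) ⋊[permMulAut _ _] Equiv.Perm (Fin (j i)))
    (i : Fin N) (k : Fin (j i)) (x : Fin (i.1 + 1)) :
    bigPerm p ⟨i, k, x⟩ = ⟨i, (p i).right k, (p i).left ((p i).right k) x⟩ := rfl

/-- `bigPerm` as a monoid hom. -/
def Phi : (∀ i : Fin N,
    (Fin (j i) → Equiv.Perm (Fin (i.1 + 1))) ⋊[permMulAut _ _] Equiv.Perm (Fin (j i)))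
    →* Equiv.Perm (BlockType N j) where
  toFun := bigPerm
  map_one' := by
    ext b
    obtain ⟨i, k, x⟩ := b
    simp [bigPerm]; rfl
  map_mul' p q := by
    ext b
    obtain ⟨i, k, x⟩ := b
    show (⟨i, (p i * q i).right k, (p i * q i).left ((p i * q i).right k) x⟩ :
        Σ i : Fin N, Fin (j i) × Fin (i.1 + 1)) = ⟨i, (p i).right ((q i).right k),
          (p i).left ((p i).right ((q i).right k)) ((q i).left ((q i).right k) x)⟩
    refine Sigma.ext rfl (heq_of_eq (Prod.ext rfl ?_))
    show ((p i).left ((p i).right ((q i).right k)) *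
      (q i).left ((p i).right⁻¹ ((p i).right ((q i).right k)))) x = _
    simp

theorem Phi_apply (p) (b : BlockType N j) :
    Phi p b = ⟨b.1, (p b.1).right b.2.1, (p b.1).left ((p b.1).right b.2.1) b.2.2⟩ := rfl

theorem Phi_inv_apply (p) (b : BlockType N j) :
    (Phi p)⁻¹ b = ⟨b.1, (p b.1).right⁻¹ b.2.1, ((p b.1).left b.2.1)⁻¹ b.2.2⟩ := rfl

theorem Phi_apply_mk (p) (i : Fin N) (k : Fin (j i)) (x : Fin (i.1 + 1)) :
    Phi p ⟨i, k, x⟩ = ⟨i, (p i).right k, (p i).left ((p i).right k) x⟩ := rfl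


theorem Phi_injective :
    Function.Injective (Phi (N := N) (j := j)) := by
  intro p q hpq
  funext i
  have hr : (p i).right = (q i).right := by
    ext k
    have := congrArg (fun σ : Equiv.Perm (BlockType N j) =>
      ((σ (⟨i, k, 0⟩ : BlockType N j)).2.1 : ℕ)) hpq
    simpa [Phi_apply_mk] using this
  refine SemidirectProduct.ext ?_ hr
  funext k'
  ext x
  have := congrArg (fun σ : Equiv.Perm (BlockType N j) =>
    ((σ (⟨i, (p i).right⁻¹ k', x⟩ : BlockType N j)).2.2 : ℕ)) hpq
  simpa [Phi_apply_mk, hr, Equiv.apply_symm_apply] using this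

theorem Phi_conj_mem (p) {h : Equiv.Perm (BlockType N j)} (hh : h ∈ blockSubgroup N j) :
    Phi p * h * (Phi p)⁻¹ ∈ blockSubgroup N j := by
  intro b
  obtain ⟨i, k, x⟩ := b
  simp only [Equiv.Perm.mul_apply]
  erw [Equiv.Perm.mul_apply, Equiv.Perm.mul_apply, Phi_inv_apply]
  obtain ⟨hd1, hd2⟩ := hh (⟨i, (p i).right⁻¹ k, ((p i).left k)⁻¹ x⟩ : BlockType N j)
  set d := h (⟨i, (p i).right⁻¹ k, ((p i).left k)⁻¹ x⟩ : BlockType N j) with hdd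
  clear_value d
  obtain ⟨i', k', x'⟩ := d
  simp only at hd1 hd2
  subst hd1
  obtain rfl : k' = (p i').right⁻¹ k := Fin.ext hd2
  erw [Phi_apply]
  simp

theorem Phi_range_le :
    (Phi (N := N) (j := j)).range ≤ (Subgroup.normalizer (blockSubgroup N j : Set (Equiv.Perm (BlockType N j)))) := by
  rintro σ ⟨p, rfl⟩
  rw [Subgroup.mem_normalizer_iff]
  intro h
  constructor
  · exact fun hh => Phi_conj_mem p hh
  · intro hh
    have := Phi_conj_mem p⁻¹ hh
    simp only [map_inv, inv_inv] at this
    convert this using 1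
    group

theorem normalizer_le_Phi_range :
    (Subgroup.normalizer (blockSubgroup N j : Set (Equiv.Perm (BlockType N j)))) ≤ (Phi (N := N) (j := j)).range := by
  intro σ hσ
  -- block-index permutations
  have πinj : ∀ i : Fin N, Function.Injective (fun k : Fin (j i) =>
      Fin.cast (by rw [fst_eq hσ (⟨i, k, 0⟩ : BlockType N j)])
        ((σ (⟨i, k, 0⟩ : BlockType N j)).2.1) : Fin (j i) → Fin (j i)) := by
    intro i k k' hkk
    have hval : ((σ (⟨i, k, 0⟩ : BlockType N j)).2.1 : ℕ)
        = ((σ (⟨i, k', 0⟩ : BlockType N j)).2.1 : ℕ) := by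
      simpa using congrArg Fin.val hkk
    have hE : E (σ (⟨i, k, 0⟩ : BlockType N j)) (σ (⟨i, k', 0⟩ : BlockType N j)) :=
      ⟨(fst_eq hσ (⟨i, k', 0⟩ : BlockType N j)).trans
        (fst_eq hσ (⟨i, k, 0⟩ : BlockType N j)).symm, hval.symm⟩
    have := (norm_E' hσ hE).2
    exact Fin.ext this.symm
  set π : ∀ i : Fin N, Equiv.Perm (Fin (j i)) := fun i =>
    Equiv.ofBijective _ (Finite.injective_iff_bijective.mp (πinj i)) with hπ
  -- within-block permutations
  have finj : ∀ (i : Fin N) (k : Fin (j i)), Function.Injective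
      (fun x : Fin (i.1 + 1) =>
        Fin.cast (by rw [fst_eq hσ (⟨i, k, x⟩ : BlockType N j)])
          ((σ (⟨i, k, x⟩ : BlockType N j)).2.2) : Fin (i.1 + 1) → Fin (i.1 + 1)) := by
    intro i k x x' hxx
    have hval : ((σ (⟨i, k, x⟩ : BlockType N j)).2.2 : ℕ)
        = ((σ (⟨i, k, x'⟩ : BlockType N j)).2.2 : ℕ) := by
      simpa using congrArg Fin.val hxx
    have hE : E (σ (⟨i, k, x⟩ : BlockType N j)) (σ (⟨i, k, x'⟩ : BlockType N j)) :=
      norm_E hσ ⟨rfl, rfl⟩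
    have heq : σ (⟨i, k, x⟩ : BlockType N j) = σ (⟨i, k, x'⟩ : BlockType N j) :=
      blockext hE.1.symm hE.2.symm hval
    exact Fin.ext (congrArg (fun c : BlockType N j => (c.2.2 : ℕ)) (σ.injective heq))
  set fE : ∀ (i : Fin N), Fin (j i) → Equiv.Perm (Fin (i.1 + 1)) := fun i k =>
    Equiv.ofBijective _ (Finite.injective_iff_bijective.mp (finj i k)) with hfE
  refine ⟨fun i => ⟨fun k' => fE i ((π i).symm k'), π i⟩, ?_⟩
  ext b
  obtain ⟨i, k, x⟩ := b
  erw [Phi_apply]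
  simp only [Equiv.symm_apply_apply]
  have h1 : π i k = Fin.cast (by rw [fst_eq hσ (⟨i, k, 0⟩ : BlockType N j)])
      ((σ (⟨i, k, 0⟩ : BlockType N j)).2.1) := rfl
  have h2 : fE i k x = Fin.cast (by rw [fst_eq hσ (⟨i, k, x⟩ : BlockType N j)])
      ((σ (⟨i, k, x⟩ : BlockType N j)).2.2) := rfl
  have hE : E (σ (⟨i, k, x⟩ : BlockType N j)) (σ (⟨i, k, 0⟩ : BlockType N j)) :=
    norm_E hσ ⟨rfl, rfl⟩
  refine (blockext ?_ ?_ ?_ :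
    (⟨i, π i k, fE i k x⟩ : BlockType N j) = σ (⟨i, k, x⟩ : BlockType N j))
  · exact (fst_eq hσ (⟨i, k, x⟩ : BlockType N j)).symm
  · rw [h1]; simpa using hE.2
  · rw [h2]; simp

theorem Phi_range_eq :
    (Phi (N := N) (j := j)).range = (Subgroup.normalizer (blockSubgroup N j : Set (Equiv.Perm (BlockType N j)))) :=
  le_antisymm Phi_range_le normalizer_le_Phi_range

/-- the isomorphism from the product of wreath products to the normalizer -/
noncomputable def e : (∀ i : Fin N,
    (Fin (j i) → Equiv.Perm (Fin (i.1 + 1))) ⋊[permMulAut _ _] Equiv.Perm (Fin (j i)))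
    ≃* (Subgroup.normalizer (blockSubgroup N j : Set (Equiv.Perm (BlockType N j)))) :=
  (MonoidHom.ofInjective Phi_injective).trans (MulEquiv.subgroupCongr Phi_range_eq)

theorem e_coe (p) : ((e (N := N) (j := j) p : (Subgroup.normalizer (blockSubgroup N j : Set (Equiv.Perm (BlockType N j))))) :
    Equiv.Perm (BlockType N j)) = Phi p := rfl

theorem Phi_mem_iff (p) :
    Phi (N := N) (j := j) p ∈ blockSubgroup N j ↔ ∀ i, (p i).right = 1 := by
  constructor
  · intro hp i
    refine Equiv.ext fun k => ?_
    have := (hp (⟨i, k, 0⟩ : BlockType N j)).2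
    erw [Phi_apply] at this
    simp only [Equiv.Perm.one_apply]
    exact Fin.ext this
  · intro hp b
    rw [Phi_apply]
    obtain ⟨i, k, x⟩ := b
    simp [hp i]

end BlockNormalizer

/-- For `H = Im(e_φ) ≤ Sₙ` the subgroup attached to a partition of `{1,…,n}`
into `j i` blocks of size `i`, the normalizer `N(H)` is isomorphic to the product of wreath
products `∏ᵢ (Sᵢ ≀ S_{jᵢ})`, and `N(H)/H ≅ ∏ᵢ S_{jᵢ}` (expressed by a surjective homomorphism
from `N(H)` with kernel `H`). -/
theorem normalizer_of_block_subgroup (N : ℕ) (j : Fin N → ℕ) :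
    Nonempty (Subgroup.normalizer (blockSubgroup N j : Set (Equiv.Perm (BlockType N j))) ≃*
      ∀ i : Fin N, (Fin (j i) → Equiv.Perm (Fin (i.1 + 1))) ⋊[permMulAut _ _] Equiv.Perm (Fin (j i))) ∧
    ∃ f : Subgroup.normalizer (blockSubgroup N j : Set (Equiv.Perm (BlockType N j))) →* (∀ i : Fin N, Equiv.Perm (Fin (j i))),
      Function.Surjective ⇑f ∧
        f.ker = (blockSubgroup N j).subgroupOf (Subgroup.normalizer (blockSubgroup N j : Set (Equiv.Perm (BlockType N j)))) := by
  constructor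
  · exact ⟨BlockNormalizer.e.symm⟩
  · refine ⟨(Pi.monoidHom fun i => SemidirectProduct.rightHom.comp
        (Pi.evalMonoidHom _ i)).comp BlockNormalizer.e.symm.toMonoidHom, ?_, ?_⟩
    · intro pi
      refine ⟨BlockNormalizer.e (fun i => SemidirectProduct.inr (pi i)), ?_⟩
      funext i
      simp [Pi.monoidHom]
    · ext x
      rw [Subgroup.mem_subgroupOf, MonoidHom.mem_ker]
      have hx : BlockNormalizer.Phi (BlockNormalizer.e.symm x)
          = (x : Equiv.Perm (BlockType N j)) := by
        rw [← BlockNormalizer.e_coe, MulEquiv.apply_symm_apply]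
      rw [← hx, BlockNormalizer.Phi_mem_iff]
      rw [funext_iff]
      simp [Pi.monoidHom, SemidirectProduct.rightHom]
end

section
/- Two subgroups of S_n of the form Im(e_φ) and Im(e_ψ), corresponding to multiplicities (j_1,…,j_n) and (j'_1,…,j'_n), are conjugate in S_n if and only if j_i = j'_i for all i. -/
/-- The subgroup `Im(e_φ)` of `Sₙ` attached to a partition of `{1,…,n}` (encoded as the fibers
of a function `f`): the permutations preserving each block of the partition. -/
def partitionSubgroup (n : ℕ) (f : Fin n → ℕ) : Subgroup (Equiv.Perm (Fin n)) where
  carrier := {σ | ∀ i, f (σ i) = f i}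
  one_mem' := by intro i; simp
  mul_mem' := by
    intro σ τ hσ hτ i
    simpa [Equiv.Perm.mul_apply, hσ (τ i)] using hτ i
  inv_mem' := by
    intro σ hσ i
    have h := hσ (σ⁻¹ i)
    rw [show σ (σ⁻¹ i) = i from σ.apply_symm_apply i] at h
    exact h.symm

/-- The number of blocks of size `i` of the partition of `Fin n` given by the fibers of `f`. -/
noncomputable def blockMultiplicity (n : ℕ) (f : Fin n → ℕ) (i : ℕ) : ℕ :=
  Nat.card {v : Set.range f // Nat.card {x : Fin n // f x = (v : ℕ)} = i}

namespace PartitionSubgroupAux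

variable {n : ℕ}

lemma mem_iff (f : Fin n → ℕ) (σ : Equiv.Perm (Fin n)) :
    σ ∈ partitionSubgroup n f ↔ ∀ i, f (σ i) = f i := Iff.rfl

lemma swap_mem_iff (f : Fin n → ℕ) (x y : Fin n) :
    Equiv.swap x y ∈ partitionSubgroup n f ↔ f x = f y := by
  constructor
  · intro h
    have := h y
    rwa [Equiv.swap_apply_right] at this
  · intro h i
    rcases eq_or_ne i x with rfl | hx
    · rw [Equiv.swap_apply_left]; exact h.symm
    rcases eq_or_ne i y with rfl | hy
    · rw [Equiv.swap_apply_right]; exact h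
    · rw [Equiv.swap_apply_of_ne_of_ne hx hy]

/-- From the conjugation relation we extract that `σ⁻¹` matches the partitions. -/
lemma iso_of_conj {f g : Fin n → ℕ} {σ : Equiv.Perm (Fin n)}
    (h : Subgroup.map (MulAut.conj σ).toMonoidHom (partitionSubgroup n f) =
      partitionSubgroup n g) :
    ∀ x y, f (σ⁻¹ x) = f (σ⁻¹ y) ↔ g x = g y := by
  intro x y
  rw [← swap_mem_iff g x y, ← h, Subgroup.mem_map_equiv]
  have hswap : (MulAut.conj σ).symm (Equiv.swap x y) = Equiv.swap (σ⁻¹ x) (σ⁻¹ y) := by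
    have := Equiv.swap_apply_apply σ⁻¹ x y
    simpa [MulAut.conj] using this.symm
  rw [hswap, swap_mem_iff]

/-- Conversely, a partition-matching permutation conjugates one subgroup onto the other. -/
lemma conj_of_iso {f g : Fin n → ℕ} {σ : Equiv.Perm (Fin n)}
    (h : ∀ x y, g (σ x) = g (σ y) ↔ f x = f y) :
    Subgroup.map (MulAut.conj σ).toMonoidHom (partitionSubgroup n f) =
      partitionSubgroup n g := by
  ext ρ
  rw [Subgroup.mem_map_equiv]
  have hel : ∀ i, ((MulAut.conj σ).symm ρ) i = σ⁻¹ (ρ (σ i)) := by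
    intro i; simp [MulAut.conj, Equiv.Perm.mul_apply]
  constructor
  · intro hmem j
    have := hmem (σ⁻¹ j)
    rw [hel] at this
    have := (h _ _).mpr this
    simpa using this
  · intro hmem i
    rw [hel]
    have : g (σ (σ⁻¹ (ρ (σ i)))) = g (σ i) := by simpa using hmem (σ i)
    exact (h _ _).mp this

/-- A partition-matching permutation forces equal block multiplicities. -/
lemma mult_of_iso {f g : Fin n → ℕ} {σ : Equiv.Perm (Fin n)}
    (h : ∀ x y, g (σ x) = g (σ y) ↔ f x = f y) :
    ∀ i, blockMultiplicity n f i = blockMultiplicity n g i := by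
  classical
  -- the induced bijection between the sets of values
  have hu : ∀ v : Set.range f, g (σ (Exists.choose v.2)) ∈ Set.range g :=
    fun v => Set.mem_range_self _
  have hd : ∀ w : Set.range g, f (σ⁻¹ (Exists.choose w.2)) ∈ Set.range f :=
    fun w => Set.mem_range_self _
  set u : Set.range f → Set.range g := fun v => ⟨g (σ (Exists.choose v.2)), hu v⟩ with hu_def
  set d : Set.range g → Set.range f := fun w => ⟨f (σ⁻¹ (Exists.choose w.2)), hd w⟩ with hd_def
  have hdu : ∀ v, d (u v) = v := by
    intro v
    apply Subtype.ext
    have hx : f (Exists.choose v.2) = ↑v := Exists.choose_spec v.2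
    have hy : g (Exists.choose (u v).2) = ↑(u v) := Exists.choose_spec (u v).2
    have hy' : g (σ (σ⁻¹ (Exists.choose (u v).2))) = g (σ (Exists.choose v.2)) := by
      simpa [hu_def] using hy
    have := (h _ _).mp hy'
    simpa [hd_def, hx] using this
  have hud : ∀ w, u (d w) = w := by
    intro w
    apply Subtype.ext
    have hy : g (Exists.choose w.2) = ↑w := Exists.choose_spec w.2
    have hx : f (Exists.choose (d w).2) = ↑(d w) := Exists.choose_spec (d w).2
    have hx' : f (Exists.choose (d w).2) = f (σ⁻¹ (Exists.choose w.2)) := by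
      simpa [hd_def] using hx
    have := (h _ _).mpr hx'
    rw [show ∀ z, σ (σ⁻¹ z) = z from fun z => σ.apply_symm_apply z] at this
    simpa [hu_def, hy] using this
  set c : Set.range f ≃ Set.range g := ⟨u, d, hdu, hud⟩ with hc_def
  have hcard : ∀ v : Set.range f,
      Nat.card {x : Fin n // f x = (v : ℕ)} = Nat.card {x : Fin n // g x = ((c v : Set.range g) : ℕ)} := by
    intro v
    refine Nat.card_congr (Equiv.subtypeEquiv σ fun x => ?_)
    have hx : f (Exists.choose v.2) = ↑v := Exists.choose_spec v.2
    have hcv : ((c v : Set.range g) : ℕ) = g (σ (Exists.choose v.2)) := rfl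
    rw [hcv]
    constructor
    · intro hfx
      exact (h _ _).mpr (by rw [hfx, hx])
    · intro hgx
      have := (h _ _).mp hgx
      rw [this, hx]
  intro i
  exact Nat.card_congr (Equiv.subtypeEquiv c fun v => by rw [hcard v])

/-- Equal multiplicities produce a partition-matching permutation. -/
lemma iso_of_mult {f g : Fin n → ℕ}
    (hm : ∀ i, blockMultiplicity n f i = blockMultiplicity n g i) :
    ∃ σ : Equiv.Perm (Fin n), ∀ x y, g (σ x) = g (σ y) ↔ f x = f y := by
  classical
  set φ : Set.range f → ℕ := fun v => Nat.card {x : Fin n // f x = (v : ℕ)} with hφ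
  set ψ : Set.range g → ℕ := fun w => Nat.card {x : Fin n // g x = (w : ℕ)} with hψ
  have h1 : ∀ i, Nonempty ({v // φ v = i} ≃ {w // ψ w = i}) := by
    intro i
    exact Finite.card_eq.mp (hm i)
  set eqs : ∀ i, {v // φ v = i} ≃ {w // ψ w = i} := fun i => (h1 i).some with heqs
  set e : Set.range f ≃ Set.range g := Equiv.ofFiberEquiv eqs with he_def
  have he : ∀ v, ψ (e v) = φ v := fun v => Equiv.ofFiberEquiv_map eqs v
  have h2 : ∀ w : Set.range g,
      Nonempty ({x : Fin n // e (Set.rangeFactorization f x) = w} ≃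
        {x : Fin n // Set.rangeFactorization g x = w}) := by
    intro w
    refine Finite.card_eq.mp ?_
    have hL : Nat.card {x : Fin n // e (Set.rangeFactorization f x) = w} = φ (e.symm w) := by
      refine Nat.card_congr (Equiv.subtypeEquivRight fun x => ?_)
      rw [Equiv.apply_eq_iff_eq_symm_apply]
      rw [show (Set.rangeFactorization f x = e.symm w) ↔ (f x = ((e.symm w : Set.range f) : ℕ)) from
        ⟨fun hh => by rw [← hh]; rfl, fun hh => Subtype.ext (by simpa [Set.rangeFactorization] using hh)⟩]
    have hR : Nat.card {x : Fin n // Set.rangeFactorization g x = w} = ψ w := by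
      refine Nat.card_congr (Equiv.subtypeEquivRight fun x => ?_)
      exact ⟨fun hh => by rw [← hh]; rfl, fun hh => Subtype.ext (by simpa [Set.rangeFactorization] using hh)⟩
    rw [hL, hR]
    have := he (e.symm w)
    rw [Equiv.apply_symm_apply] at this; exact this.symm
  set eqs2 : ∀ w : Set.range g, {x : Fin n // e (Set.rangeFactorization f x) = w} ≃
      {x : Fin n // Set.rangeFactorization g x = w} := fun w => (h2 w).some with heqs2
  refine ⟨Equiv.ofFiberEquiv eqs2, ?_⟩
  have hσ : ∀ x, Set.rangeFactorization g (Equiv.ofFiberEquiv eqs2 x) =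
      e (Set.rangeFactorization f x) := fun x => Equiv.ofFiberEquiv_map eqs2 x
  intro x y
  have hx : g (Equiv.ofFiberEquiv eqs2 x) = ((e (Set.rangeFactorization f x) : Set.range g) : ℕ) := by
    rw [← hσ x]; rfl
  have hy : g (Equiv.ofFiberEquiv eqs2 y) = ((e (Set.rangeFactorization f y) : Set.range g) : ℕ) := by
    rw [← hσ y]; rfl
  rw [hx, hy, Subtype.coe_inj, Equiv.apply_eq_iff_eq]
  constructor
  · intro hh
    have : ((Set.rangeFactorization f x : Set.range f) : ℕ) = ((Set.rangeFactorization f y : Set.range f) : ℕ) := by rw [hh]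
    simpa [Set.rangeFactorization] using this
  · intro hh
    exact Subtype.ext (by simpa [Set.rangeFactorization] using hh)

end PartitionSubgroupAux

/-- Two subgroups of `Sₙ` of the form `Im(e_φ)`, `Im(e_ψ)`, with multiplicities
`(j₁,…,jₙ)` and `(j'₁,…,j'ₙ)`, are conjugate in `Sₙ` if and only if `jᵢ = j'ᵢ` for all `i`. -/
theorem partition_subgroups_conjugate_iff (n : ℕ) (f g : Fin n → ℕ) :
    (∃ σ : Equiv.Perm (Fin n),
        Subgroup.map (MulAut.conj σ).toMonoidHom (partitionSubgroup n f) =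
          partitionSubgroup n g) ↔
      ∀ i : ℕ, blockMultiplicity n f i = blockMultiplicity n g i := by
  constructor
  · rintro ⟨σ, hσ⟩
    have hiso := PartitionSubgroupAux.iso_of_conj hσ
    have := PartitionSubgroupAux.mult_of_iso (f := g) (g := f) (σ := σ⁻¹) hiso
    exact fun i => (this i).symm
  · intro hm
    obtain ⟨σ, hσ⟩ := PartitionSubgroupAux.iso_of_mult hm
    exact ⟨σ, PartitionSubgroupAux.conj_of_iso hσ⟩
end

section
/- Let H = Im(e_φ) ≤ S_n be the subgroup corresponding to multiplicities (j_1,…,j_n) with Σ i·j_i = n, acting on V(m,n) = {(x_1,…,x_n) ∈ (k^m)^n : Σx_i = 0}. Then the H-fixed subspace V(m,n)^{≥H} consists of tuples that are constant on each block of the partition, and the quotient space V(m,n)/V(m,n)^{≥H} is isomorphic as a representation of H to the direct sum ⊕_{i=1}^n V(m,i)^{⊕ j_i}. -/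
instance (N : ℕ) (j : Fin N → ℕ) : Fintype (BlockType N j) := by
  unfold BlockType; infer_instance

/-- The action on `BlockType N j` of an element `h` of `H = ∏ᵢ Sᵢ^{jᵢ}`, acting on each block
separately. -/
def bAct {N : ℕ} {j : Fin N → ℕ} (h : ∀ i : Fin N, Fin (j i) → Equiv.Perm (Fin (i.1 + 1))) :
    BlockType N j → BlockType N j :=
  fun b => ⟨b.1, b.2.1, h b.1 b.2.1 b.2.2⟩

/-- The sum map `(k^m)^ι → k^m`; its kernel is the reduced permutation representation
`V(m,ι)`. -/
noncomputable def sumMap (k : Type) [Field k] (m : ℕ) (ι : Type) [Fintype ι] :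
    (ι → Fin m → k) →ₗ[k] (Fin m → k) where
  toFun x := ∑ i : ι, x i
  map_add' := by intro x y; simp [Finset.sum_add_distrib]
  map_smul' := by intro c x; simp [Finset.smul_sum]


section Aux
variable {k : Type} [Field k] {m N : ℕ} {j : Fin N → ℕ}

/-- value of the quotient map on a raw tuple -/
noncomputable def qAux (x : BlockType N j → Fin m → k) (p : Σ i : Fin N, Fin (j i)) :
    Fin (p.1.1 + 1) → Fin m → k :=
  fun s => x ⟨p.1, p.2, s⟩ - ((p.1.1 + 1 : ℕ) : k)⁻¹ • ∑ t, x ⟨p.1, p.2, t⟩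

lemma blocksize_ne_zero (hchar : IsUnit ((Nat.factorial (Fintype.card (BlockType N j)) : k)))
    (p : Σ i : Fin N, Fin (j i)) : ((p.1.1 + 1 : ℕ) : k) ≠ 0 := by
  have hinj : Function.Injective
      (fun s : Fin (p.1.1 + 1) => (⟨p.1, p.2, s⟩ : BlockType N j)) := by
    intro a b hab
    simpa using hab
  have hle : p.1.1 + 1 ≤ Fintype.card (BlockType N j) := by
    exact le_trans (le_of_eq (by simp)) (Fintype.card_le_of_injective _ hinj)
  have hdvd : ((p.1.1 + 1 : ℕ) : k) ∣
      ((Nat.factorial (Fintype.card (BlockType N j)) : ℕ) : k) :=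
    Nat.cast_dvd_cast (Nat.dvd_factorial (Nat.succ_pos _) hle)
  exact (isUnit_of_dvd_unit hdvd hchar).ne_zero

lemma qAux_sum (hchar : IsUnit ((Nat.factorial (Fintype.card (BlockType N j)) : k)))
    (x : BlockType N j → Fin m → k) (p : Σ i : Fin N, Fin (j i)) :
    ∑ s, qAux x p s = 0 := by
  have hne := blocksize_ne_zero hchar p
  simp only [qAux, Finset.sum_sub_distrib, Finset.sum_const, Finset.card_univ,
    Fintype.card_fin, sub_eq_zero]
  rw [smul_comm, ← Nat.cast_smul_eq_nsmul k, smul_smul, inv_mul_cancel₀ hne, one_smul]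
end Aux

section Aux2
variable {k : Type} [Field k] {m N : ℕ} {j : Fin N → ℕ}

lemma qAux_add (x y : BlockType N j → Fin m → k) (p : Σ i : Fin N, Fin (j i)) :
    qAux (x + y) p = qAux x p + qAux y p := by
  funext s
  show x ⟨p.1, p.2, s⟩ + y ⟨p.1, p.2, s⟩ - ((p.1.1 + 1 : ℕ) : k)⁻¹ • ∑ t, (x ⟨p.1, p.2, t⟩ + y ⟨p.1, p.2, t⟩) =
    (x ⟨p.1, p.2, s⟩ - ((p.1.1 + 1 : ℕ) : k)⁻¹ • ∑ t, x ⟨p.1, p.2, t⟩) + (y ⟨p.1, p.2, s⟩ - ((p.1.1 + 1 : ℕ) : k)⁻¹ • ∑ t, y ⟨p.1, p.2, t⟩)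
  simp only [qAux, Pi.add_apply, Finset.sum_add_distrib, smul_add]
  abel

lemma qAux_smul (c : k) (x : BlockType N j → Fin m → k) (p : Σ i : Fin N, Fin (j i)) :
    qAux (c • x) p = c • qAux x p := by
  funext s
  show c • x ⟨p.1, p.2, s⟩ - ((p.1.1 + 1 : ℕ) : k)⁻¹ • ∑ t, c • x ⟨p.1, p.2, t⟩ =
    c • (x ⟨p.1, p.2, s⟩ - ((p.1.1 + 1 : ℕ) : k)⁻¹ • ∑ t, x ⟨p.1, p.2, t⟩)
  simp only [qAux, Pi.smul_apply, ← Finset.smul_sum, smul_sub, smul_comm c]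

noncomputable def qMap (k : Type) [Field k] (m N : ℕ) (j : Fin N → ℕ)
    (hchar : IsUnit ((Nat.factorial (Fintype.card (BlockType N j)) : k))) :
    ↥(LinearMap.ker (sumMap k m (BlockType N j))) →ₗ[k]
      (∀ p : Σ i : Fin N, Fin (j i), ↥(LinearMap.ker (sumMap k m (Fin (p.1.1 + 1))))) where
  toFun x := fun p => ⟨qAux (x : BlockType N j → Fin m → k) p, by
    show (∑ s, qAux (x : BlockType N j → Fin m → k) p s) = 0
    exact qAux_sum hchar _ p⟩
  map_add' := by
    intro x y
    funext p
    exact Subtype.ext (qAux_add _ _ p)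
  map_smul' := by
    intro c x
    funext p
    exact Subtype.ext (qAux_smul c _ p)
end Aux2

/-- For `H = Im(e_φ) ≤ Sₙ` with multiplicities `(j₁,…,jₙ)` acting on
`V(m,n) = {x : Σ xᵢ = 0}`, the `H`-fixed subspace consists of the tuples constant on each
block, and the quotient `V(m,n)/V(m,n)^{≥H}` is `H`-equivariantly isomorphic to
`⊕ᵢ V(m,i)^{⊕ jᵢ}` (expressed via a surjective equivariant linear map whose kernel is the
fixed subspace). -/

theorem quotient_by_fixed_subspace (k : Type) [Field k] (m N : ℕ) (j : Fin N → ℕ)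
    (hchar : IsUnit ((Nat.factorial (Fintype.card (BlockType N j)) : k))) :
    -- the `H`-fixed vectors are exactly the tuples constant on each block
    (∀ x : ↥(LinearMap.ker (sumMap k m (BlockType N j))),
      ((∀ h, (x : BlockType N j → Fin m → k) ∘ bAct h = (x : BlockType N j → Fin m → k)) ↔
        (∀ (i : Fin N) (b : Fin (j i)) (s s' : Fin (i.1 + 1)),
          (x : BlockType N j → Fin m → k) ⟨i, b, s⟩ =
            (x : BlockType N j → Fin m → k) ⟨i, b, s'⟩))) ∧
    -- `V(m,n)/V(m,n)^{≥H} ≅ ⊕ᵢ V(m,i)^{⊕ jᵢ}` equivariantly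
    (∃ q : ↥(LinearMap.ker (sumMap k m (BlockType N j))) →ₗ[k]
        (∀ p : Σ i : Fin N, Fin (j i), ↥(LinearMap.ker (sumMap k m (Fin (p.1.1 + 1))))),
      Function.Surjective ⇑q ∧
      (∀ x, q x = 0 ↔
        (∀ (i : Fin N) (b : Fin (j i)) (s s' : Fin (i.1 + 1)),
          (x : BlockType N j → Fin m → k) ⟨i, b, s⟩ =
            (x : BlockType N j → Fin m → k) ⟨i, b, s'⟩)) ∧
      (∀ (h : ∀ i : Fin N, Fin (j i) → Equiv.Perm (Fin (i.1 + 1)))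
          (x y : ↥(LinearMap.ker (sumMap k m (BlockType N j)))),
        (y : BlockType N j → Fin m → k) = (x : BlockType N j → Fin m → k) ∘ bAct h →
        ∀ p : Σ i : Fin N, Fin (j i),
          ((q y p : Fin (p.1.1 + 1) → Fin m → k)) =
            ((q x p : Fin (p.1.1 + 1) → Fin m → k)) ∘ ⇑(h p.1 p.2))) := by
  constructor
  · intro x
    constructor
    · intro hfix i b s s'
      set h : ∀ i' : Fin N, Fin (j i') → Equiv.Perm (Fin (i'.1 + 1)) :=
        Function.update (fun i' => fun _ => (1 : Equiv.Perm (Fin (i'.1 + 1)))) i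
          (Function.update (fun _ : Fin (j i) => (1 : Equiv.Perm (Fin (i.1 + 1)))) b
            (Equiv.swap s s')) with hh
      have key : (x : BlockType N j → Fin m → k) ⟨i, b, h i b s⟩ = (x : BlockType N j → Fin m → k) ⟨i, b, s⟩ := congrFun (hfix h) ⟨i, b, s⟩
      simp only [Function.comp_apply, bAct, hh, Function.update_self,
        Equiv.swap_apply_left] at key
      exact key.symm
    · intro hconst h
      funext b
      obtain ⟨i, bb, s⟩ := b
      show (x : BlockType N j → Fin m → k) ⟨i, bb, h i bb s⟩ = (x : BlockType N j → Fin m → k) ⟨i, bb, s⟩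
      exact hconst i bb _ s
  · refine ⟨qMap k m N j hchar, ?_, ?_, ?_⟩
    · intro y
      have hmem : (fun b : BlockType N j => (y ⟨b.1, b.2.1⟩ : Fin (b.1.1 + 1) → Fin m → k) b.2.2)
          ∈ LinearMap.ker (sumMap k m (BlockType N j)) := by
        show (∑ b : BlockType N j, (y ⟨b.1, b.2.1⟩ : Fin (b.1.1 + 1) → Fin m → k) b.2.2) = 0
        rw [show (∑ b : BlockType N j, (y ⟨b.1, b.2.1⟩ : Fin (b.1.1 + 1) → Fin m → k) b.2.2)
            = ∑ b : Σ i : Fin N, Fin (j i) × Fin (i.1 + 1),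
                (y ⟨b.1, b.2.1⟩ : Fin (b.1.1 + 1) → Fin m → k) b.2.2 from rfl,
          ← Finset.univ_sigma_univ, Finset.sum_sigma]
        refine Finset.sum_eq_zero fun i _ => ?_
        rw [Fintype.sum_prod_type]
        refine Finset.sum_eq_zero fun b _ => ?_
        exact (y ⟨i, b⟩).2
      refine ⟨⟨_, hmem⟩, ?_⟩
      funext p
      refine Subtype.ext (funext fun s => ?_)
      show qAux _ p s = _
      have hsum : (∑ t, (y p : Fin (p.1.1 + 1) → Fin m → k) t) = 0 := (y p).2
      simp [qAux, hsum]
    · intro x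
      constructor
      · intro h0 i b s s'
        have hs := congrArg (fun z => ((z ⟨i, b⟩ : _) : Fin (i.1 + 1) → Fin m → k) s) h0
        have hs' := congrArg (fun z => ((z ⟨i, b⟩ : _) : Fin (i.1 + 1) → Fin m → k) s') h0
        simp only [qMap, LinearMap.coe_mk, AddHom.coe_mk, Pi.zero_apply,
          ZeroMemClass.coe_zero] at hs hs'
        have hs : qAux (x : BlockType N j → Fin m → k) ⟨i, b⟩ s = 0 := hs
        have hs' : qAux (x : BlockType N j → Fin m → k) ⟨i, b⟩ s' = 0 := hs'
        have e1 := sub_eq_zero.mp (by simpa [qAux] using hs)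
        have e2 := sub_eq_zero.mp (by simpa [qAux] using hs')
        rw [e1, e2]
      · intro hconst
        funext p
        refine Subtype.ext (funext fun s => ?_)
        show qAux (x : BlockType N j → Fin m → k) p s = 0
        have hsum : (∑ t, (x : BlockType N j → Fin m → k) ⟨p.1, p.2, t⟩)
            = (p.1.1 + 1) • (x : BlockType N j → Fin m → k) ⟨p.1, p.2, s⟩ := by
          calc (∑ t, (x : BlockType N j → Fin m → k) ⟨p.1, p.2, t⟩)
              = ∑ _t : Fin (p.1.1 + 1), (x : BlockType N j → Fin m → k) ⟨p.1, p.2, s⟩ :=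
                Finset.sum_congr rfl (fun t _ => hconst p.1 p.2 t s)
            _ = (p.1.1 + 1) • (x : BlockType N j → Fin m → k) ⟨p.1, p.2, s⟩ := by simp
        rw [qAux, hsum, ← Nat.cast_smul_eq_nsmul k, smul_smul, inv_mul_cancel₀
          (blocksize_ne_zero hchar p), one_smul, sub_self]
    · intro h x y hxy p
      funext s
      show qAux (y : BlockType N j → Fin m → k) p s
        = qAux (x : BlockType N j → Fin m → k) p (h p.1 p.2 s)
      have hsum : (∑ t, (y : BlockType N j → Fin m → k) ⟨p.1, p.2, t⟩)
          = ∑ t, (x : BlockType N j → Fin m → k) ⟨p.1, p.2, t⟩ := by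
        simp only [hxy, Function.comp_apply, bAct]
        exact Equiv.sum_comp (h p.1 p.2)
          (fun t => (x : BlockType N j → Fin m → k) ⟨p.1, p.2, t⟩)
      simp only [qAux, hxy, Function.comp_apply, bAct]
      show (x : BlockType N j → Fin m → k) ⟨p.1, p.2, h p.1 p.2 s⟩ - ((p.1.1 + 1 : ℕ) : k)⁻¹ • ∑ t, (x : BlockType N j → Fin m → k) ⟨p.1, p.2, h p.1 p.2 t⟩ =
        (x : BlockType N j → Fin m → k) ⟨p.1, p.2, h p.1 p.2 s⟩ - ((p.1.1 + 1 : ℕ) : k)⁻¹ • ∑ t, (x : BlockType N j → Fin m → k) ⟨p.1, p.2, t⟩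
      rw [Equiv.sum_comp (h p.1 p.2)
        (fun t => (x : BlockType N j → Fin m → k) ⟨p.1, p.2, t⟩)]
end

section
/- Let W be a finite étale scheme of degree d over a field k and (X, Z) a pair of a k-scheme X with closed subscheme Z of codimension ≥ n. Then in the scheme X^W of W-points (the Weil restriction along W), the closed subscheme Z^W has codimension ≥ nd. -/
set_option maxHeartbeats 1000000

open scoped TensorProduct
open PiTensorProduct

noncomputable section AuxCodim

variable {k : Type} [CommSemiring k]

/-- Lift a family of algebra homs to an algebra hom out of a constant `PiTensorProduct`. -/
def liftFamily {ι : Type} [Fintype ι] {R S : Type} [CommSemiring R] [CommSemiring S]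
    [Algebra k R] [Algebra k S] (φ : ι → (R →ₐ[k] S)) :
    (⨂[k] _ : ι, R) →ₐ[k] S :=
  PiTensorProduct.liftAlgHom
    ((MultilinearMap.mkPiAlgebra k ι S).compLinearMap fun i => (φ i).toLinearMap)
    (by simp) (fun x y => by
      simp [Finset.prod_mul_distrib, _root_.map_mul])

@[simp] lemma liftFamily_tprod {ι : Type} [Fintype ι] {R S : Type} [CommSemiring R]
    [CommSemiring S] [Algebra k R] [Algebra k S] (φ : ι → (R →ₐ[k] S)) (x : ι → R) :
    liftFamily φ (tprod k x) = ∏ i, φ i (x i) := by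
  simp [liftFamily, liftAlgHom]

@[simp] lemma liftFamily_single {ι : Type} [Fintype ι] [DecidableEq ι] {R S : Type}
    [CommSemiring R] [CommSemiring S] [Algebra k R] [Algebra k S]
    (φ : ι → (R →ₐ[k] S)) (i : ι) (a : R) :
    liftFamily φ (PiTensorProduct.singleAlgHom i a) = φ i a := by
  rw [PiTensorProduct.singleAlgHom_apply, liftFamily_tprod]
  rw [Fintype.prod_eq_single i]
  · simp
  · intro j hj
    simp [MonoidHom.mulSingle_apply, Pi.mulSingle, Function.update_of_ne hj]



section Psi

variable (k R : Type) [CommSemiring k] [CommRing R] [Algebra k R] {d : ℕ}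

/-- The family of maps into `(⨂_{i ≠ j} R) ⊗ R`. -/
def psiFam (j : Fin d) : ∀ _ : Fin d, R →ₐ[k] ((⨂[k] _ : {i : Fin d // i ≠ j}, R) ⊗[k] R) :=
  fun i => if h : i = j then Algebra.TensorProduct.includeRight
    else Algebra.TensorProduct.includeLeft.comp
      (PiTensorProduct.singleAlgHom (R := k) (A := fun _ : {i : Fin d // i ≠ j} => R) ⟨i, h⟩)

def psiFwd (j : Fin d) :
    (⨂[k] _ : Fin d, R) →ₐ[k] ((⨂[k] _ : {i : Fin d // i ≠ j}, R) ⊗[k] R) :=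
  liftFamily (k := k) (ι := Fin d) (R := R)
    (S := (⨂[k] _ : {i : Fin d // i ≠ j}, R) ⊗[k] R) (psiFam k R j)

def psiBwd (j : Fin d) :
    ((⨂[k] _ : {i : Fin d // i ≠ j}, R) ⊗[k] R) →ₐ[k] (⨂[k] _ : Fin d, R) :=
  Algebra.TensorProduct.lift
    (liftFamily fun i : {i : Fin d // i ≠ j} =>
      PiTensorProduct.singleAlgHom (R := k) (A := fun _ : Fin d => R) i.1)
    (PiTensorProduct.singleAlgHom (R := k) (A := fun _ : Fin d => R) j)
    (fun _ _ => Commute.all _ _)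

lemma psiFwd_single (j : Fin d) (i : Fin d) (a : R) :
    psiFwd k R j (PiTensorProduct.singleAlgHom (R := k) (A := fun _ : Fin d => R) i a)
      = psiFam k R j i a :=
  liftFamily_single _ _ _

lemma psiBwd_includeRight (j : Fin d) (a : R) :
    psiBwd k R j (Algebra.TensorProduct.includeRight a)
      = PiTensorProduct.singleAlgHom (R := k) (A := fun _ : Fin d => R) j a := by
  rw [Algebra.TensorProduct.includeRight_apply, psiBwd, Algebra.TensorProduct.lift_tmul,
    _root_.map_one, one_mul]

lemma psiBwd_includeLeft_single (j : Fin d) (i' : {i : Fin d // i ≠ j}) (a : R) :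
    psiBwd k R j (Algebra.TensorProduct.includeLeft (S := k)
        (PiTensorProduct.singleAlgHom (R := k) (A := fun _ : {i : Fin d // i ≠ j} => R) i' a))
      = PiTensorProduct.singleAlgHom (R := k) (A := fun _ : Fin d => R) i'.1 a := by
  rw [Algebra.TensorProduct.includeLeft_apply, psiBwd, Algebra.TensorProduct.lift_tmul,
    _root_.map_one, mul_one, liftFamily_single]

lemma psiBwd_comp_fwd (j : Fin d) :
    (psiBwd k R j).comp (psiFwd k R j) = AlgHom.id k _ := by
  apply PiTensorProduct.algHom_ext
  intro i
  apply AlgHom.ext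
  intro a
  simp only [AlgHom.comp_apply, AlgHom.id_apply]
  rw [psiFwd_single]
  by_cases h : i = j
  · subst h
    rw [psiFam, dif_pos rfl, psiBwd_includeRight]
  · rw [psiFam, dif_neg h, AlgHom.comp_apply, psiBwd_includeLeft_single]

lemma psiFwd_comp_bwd (j : Fin d) :
    (psiFwd k R j).comp (psiBwd k R j) = AlgHom.id k _ := by
  apply Algebra.TensorProduct.ext
  · apply PiTensorProduct.algHom_ext
    intro i'
    apply AlgHom.ext
    intro a
    simp only [AlgHom.comp_apply, AlgHom.id_apply]
    rw [psiBwd_includeLeft_single, psiFwd_single, psiFam, dif_neg i'.2]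
    rfl
  · apply AlgHom.ext
    intro a
    simp only [AlgHom.comp_apply, AlgHom.id_apply, AlgHom.restrictScalars_apply]
    rw [psiBwd_includeRight, psiFwd_single, psiFam, dif_pos rfl]

/-- Splitting off the `j`-th factor of a constant `PiTensorProduct`. -/
def psi (j : Fin d) :
    (⨂[k] _ : Fin d, R) ≃ₐ[k] ((⨂[k] _ : {i : Fin d // i ≠ j}, R) ⊗[k] R) :=
  AlgEquiv.ofAlgHom (psiFwd k R j) (psiBwd k R j) (psiFwd_comp_bwd k R j) (psiBwd_comp_fwd k R j)

lemma psi_single_self (j : Fin d) (a : R) :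
    psi k R j (PiTensorProduct.singleAlgHom (R := k) (A := fun _ : Fin d => R) j a)
      = Algebra.TensorProduct.includeRight a := by
  have h1 : psi k R j (PiTensorProduct.singleAlgHom (R := k) (A := fun _ : Fin d => R) j a)
      = psiFwd k R j (PiTensorProduct.singleAlgHom (R := k) (A := fun _ : Fin d => R) j a) := rfl
  rw [h1, psiFwd_single, psiFam, dif_pos rfl]

lemma psi_single_ne (j : Fin d) {i : Fin d} (h : i ≠ j) (a : R) :
    psi k R j (PiTensorProduct.singleAlgHom (R := k) (A := fun _ : Fin d => R) i a)
      = Algebra.TensorProduct.includeLeft (S := k)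
          (PiTensorProduct.singleAlgHom (R := k) (A := fun _ : {i : Fin d // i ≠ j} => R)
            ⟨i, h⟩ a) := by
  have h1 : psi k R j (PiTensorProduct.singleAlgHom (R := k) (A := fun _ : Fin d => R) i a)
      = psiFwd k R j (PiTensorProduct.singleAlgHom (R := k) (A := fun _ : Fin d => R) i a) := rfl
  rw [h1, psiFwd_single, psiFam, dif_neg h]
  rfl

end Psi

section GD2

variable {k B C : Type} [Field k] [CommRing B] [CommRing C] [Algebra k B] [Algebra k C]

/-- Going down for tensor products over a field: we can lower the `C`-component of a prime of
`B ⊗[k] C` while keeping the `B`-component fixed. -/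
theorem tensor_going_down
    (Q : Ideal (B ⊗[k] C)) (hQ : Q.IsPrime) (p' : Ideal C) (hp' : p'.IsPrime)
    (hlt : p' < Q.comap (Algebra.TensorProduct.includeRight : C →ₐ[k] B ⊗[k] C)) :
    ∃ Q' : Ideal (B ⊗[k] C), Q'.IsPrime ∧ Q' < Q ∧
      Q'.comap (Algebra.TensorProduct.includeRight : C →ₐ[k] B ⊗[k] C) = p' ∧
      Q'.comap (Algebra.TensorProduct.includeLeft : B →ₐ[k] B ⊗[k] C)
        = Q.comap (Algebra.TensorProduct.includeLeft : B →ₐ[k] B ⊗[k] C) := by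
  classical
  set ιR : C →ₐ[k] B ⊗[k] C := Algebra.TensorProduct.includeRight with hιR
  set ιL : B →ₐ[k] B ⊗[k] C := Algebra.TensorProduct.includeLeft with hιL
  set q : Ideal B := Q.comap ιL with hq
  set p : Ideal C := Q.comap ιR with hp
  have hone_not_Q : (1 : B ⊗[k] C) ∉ Q := (Ideal.ne_top_iff_one Q).mp hQ.ne_top
  have hone_not_p' : (1 : C) ∉ p' := (Ideal.ne_top_iff_one p').mp hp'.ne_top
  -- the multiplicative set
  let S : Submonoid (B ⊗[k] C) :=
    { carrier := {a | ∃ x s, x ∉ Q ∧ s ∉ p' ∧ a = x * ιR s}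
      one_mem' := ⟨1, 1, hone_not_Q, hone_not_p', by simp⟩
      mul_mem' := by
        rintro a b ⟨x, s, hx, hs, rfl⟩ ⟨x2, s2, hx2, hs2, rfl⟩
        refine ⟨x * x2, s * s2, fun h => ((hQ.mem_or_mem h).elim hx hx2),
          fun h => ((hp'.mem_or_mem h).elim hs hs2), by rw [_root_.map_mul]; ring⟩ }
  set I₀ : Ideal (B ⊗[k] C) := Ideal.map ιL q ⊔ Ideal.map ιR p' with hI₀def
  -- main point : I₀ is disjoint from S
  have hdis : ∀ a ∈ S, a ∉ I₀ := by
    rintro a ⟨x, s, hx, hs, rfl⟩ ha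
    -- pass to the quotient by q in the left factor
    set π : B ⊗[k] C →ₐ[k] (B ⧸ q) ⊗[k] C :=
      Algebra.TensorProduct.map (Ideal.Quotient.mkₐ k q) (AlgHom.id k C) with hπdef
    have hπs : Function.Surjective π := by
      intro z
      induction z using TensorProduct.induction_on with
      | zero => exact ⟨0, map_zero _⟩
      | tmul b c =>
        obtain ⟨b0, rfl⟩ := Ideal.Quotient.mk_surjective b
        exact ⟨b0 ⊗ₜ c, rfl⟩
      | add u v hu hv =>
        obtain ⟨u0, rfl⟩ := hu
        obtain ⟨v0, rfl⟩ := hv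
        exact ⟨u0 + v0, map_add _ _ _⟩
    have hker : RingHom.ker π = Ideal.map ιL q := by
      rw [hπdef, Algebra.TensorProduct.map_ker _ _ (Ideal.Quotient.mkₐ_surjective k q)
        Function.surjective_id]
      have h1 : RingHom.ker (Ideal.Quotient.mkₐ k q) = q := Ideal.Quotient.mkₐ_ker k q
      have h2 : RingHom.ker (AlgHom.id k C) = ⊥ := by
        ext z
        simp [RingHom.mem_ker]
      rw [h1, h2, Ideal.map_bot, sup_bot_eq, hιL]
    set ιR' : C →ₐ[k] (B ⧸ q) ⊗[k] C := Algebra.TensorProduct.includeRight with hιR'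
    set KE : Ideal ((B ⧸ q) ⊗[k] C) := Ideal.map ιR' p' with hKE
    -- the image of I₀ is contained in KE
    have hπa : π (x * ιR s) ∈ KE := by
      have hI₀le : I₀ ≤ Ideal.comap π KE := by
        refine sup_le ?_ ?_
        · rw [Ideal.map_le_iff_le_comap]
          intro b hb
          show π (ιL b) ∈ KE
          have hb0 : π (ιL b) = Algebra.TensorProduct.includeLeft (S := k)
              (Ideal.Quotient.mk q b) := rfl
          rw [hb0, Ideal.Quotient.eq_zero_iff_mem.mpr hb, map_zero]
          exact zero_mem _
        · rw [Ideal.map_le_iff_le_comap]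
          intro c hc
          show π (ιR c) ∈ KE
          have hc0 : π (ιR c) = ιR' c := rfl
          rw [hc0]
          exact Ideal.mem_map_of_mem _ hc
      exact hI₀le ha
    -- move to `C ⊗ (B ⧸ q)`, which is free as a `C`-module
    set e : ((B ⧸ q) ⊗[k] C) ≃ₐ[k] (C ⊗[k] (B ⧸ q)) := Algebra.TensorProduct.comm k _ _ with he
    set KF : Ideal (C ⊗[k] (B ⧸ q)) := Ideal.map (algebraMap C (C ⊗[k] (B ⧸ q))) p' with hKF
    have heK : ∀ z ∈ KE, e z ∈ KF := by
      intro z hz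
      have : KE ≤ Ideal.comap e.toAlgHom KF := by
        rw [hKE, Ideal.map_le_iff_le_comap]
        intro c hc
        show e (ιR' c) ∈ KF
        have : e (ιR' c) = algebraMap C (C ⊗[k] (B ⧸ q)) c := by
          simp [he, hιR', Algebra.TensorProduct.includeRight_apply,
            Algebra.TensorProduct.comm_tmul, Algebra.TensorProduct.algebraMap_apply]
        rw [this]
        exact Ideal.mem_map_of_mem _ hc
      exact this hz
    have heKsymm : ∀ z ∈ KF, e.symm z ∈ KE := by
      intro z hz
      have : KF ≤ Ideal.comap e.symm.toAlgHom KE := by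
        rw [hKF, Ideal.map_le_iff_le_comap]
        intro c hc
        show e.symm (algebraMap C (C ⊗[k] (B ⧸ q)) c) ∈ KE
        have : e.symm (algebraMap C (C ⊗[k] (B ⧸ q)) c) = ιR' c := by
          simp [he, hιR', Algebra.TensorProduct.includeRight_apply,
            Algebra.TensorProduct.comm_symm_tmul, Algebra.TensorProduct.algebraMap_apply]
        rw [this]
        exact Ideal.mem_map_of_mem _ hc
      exact this hz
    -- basis coordinates
    set bV := Module.Basis.ofVectorSpace k (B ⧸ q) with hbV
    set bF := Algebra.TensorProduct.basis C bV with hbF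
    have hKFsmul : ∀ z : C ⊗[k] (B ⧸ q), z ∈ KF ↔ z ∈ p' • (⊤ : Submodule C (C ⊗[k] (B ⧸ q))) := by
      intro z
      rw [Ideal.smul_top_eq_map, Submodule.restrictScalars_mem, hKF]
    have hcoord : ∀ z ∈ p' • (⊤ : Submodule C (C ⊗[k] (B ⧸ q))), ∀ idx, bF.repr z idx ∈ p' := by
      intro z hz
      refine Submodule.smul_induction_on hz ?_ ?_
      · intro c hc w _ idx
        rw [map_smul, Finsupp.smul_apply, smul_eq_mul]
        exact Ideal.mul_mem_right _ _ hc
      · intro u v hu hv idx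
        rw [map_add, Finsupp.add_apply]
        exact add_mem (hu idx) (hv idx)
    have hback : ∀ z : C ⊗[k] (B ⧸ q), (∀ idx, bF.repr z idx ∈ p') →
        z ∈ p' • (⊤ : Submodule C (C ⊗[k] (B ⧸ q))) := by
      intro z hz
      have hrepr := bF.linearCombination_repr z
      rw [← hrepr, Finsupp.linearCombination_apply, Finsupp.sum]
      refine Submodule.sum_mem _ fun idx _ => ?_
      exact Submodule.smul_mem_smul (hz idx) Submodule.mem_top
    -- now the computation
    have hformula : e (π (x * ιR s)) = s • (e (π x)) := by
      have h1 : π (x * ιR s) = π x * π (ιR s) := by rw [← _root_.map_mul]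
      have h2 : π (ιR s) = ιR' s := rfl
      rw [h1, h2, _root_.map_mul]
      have h3 : e (ιR' s) = algebraMap C (C ⊗[k] (B ⧸ q)) s := by
        simp [he, hιR', Algebra.TensorProduct.includeRight_apply,
          Algebra.TensorProduct.comm_tmul, Algebra.TensorProduct.algebraMap_apply]
      rw [h3, mul_comm, ← Algebra.smul_def]
    have hsy : s • (e (π x)) ∈ p' • (⊤ : Submodule C (C ⊗[k] (B ⧸ q))) := by
      rw [← hKFsmul, ← hformula]
      exact heK _ hπa
    have hyKF : e (π x) ∈ KF := by
      rw [hKFsmul]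
      refine hback _ fun idx => ?_
      have := hcoord _ hsy idx
      rw [map_smul, Finsupp.smul_apply, smul_eq_mul] at this
      exact (hp'.mem_or_mem this).resolve_left hs
    have hπxKE : π x ∈ KE := by
      have := heKsymm _ hyKF
      rwa [AlgEquiv.symm_apply_apply] at this
    -- pull back
    have hKEle : KE ≤ Ideal.map (π : B ⊗[k] C →+* (B ⧸ q) ⊗[k] C) (Ideal.map ιR p') := by
      rw [hKE, Ideal.map_le_iff_le_comap]
      intro c hc
      have hc0 : ιR' c = π (ιR c) := rfl
      rw [Ideal.mem_comap, hc0]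
      exact Ideal.mem_map_of_mem _ (Ideal.mem_map_of_mem _ hc)
    have hxmem : x ∈ Ideal.map ιR p'
        ⊔ Ideal.comap (π : B ⊗[k] C →+* (B ⧸ q) ⊗[k] C) ⊥ := by
      rw [← Ideal.comap_map_of_surjective (π : B ⊗[k] C →+* (B ⧸ q) ⊗[k] C) hπs]
      exact hKEle hπxKE
    have hxQ : x ∈ Q := by
      have hle : Ideal.map ιR p'
          ⊔ Ideal.comap (π : B ⊗[k] C →+* (B ⧸ q) ⊗[k] C) ⊥ ≤ Q := by
        refine sup_le ?_ ?_
        · exact le_trans (Ideal.map_mono (le_of_lt hlt)) Ideal.map_comap_le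
        · rw [← RingHom.ker_eq_comap_bot]
          show RingHom.ker π ≤ Q
          rw [hker]
          exact Ideal.map_comap_le
      exact hle hxmem
    exact hx hxQ
  -- get a prime containing I₀ disjoint from S
  have hdisj : Disjoint (I₀ : Set (B ⊗[k] C)) (S : Set (B ⊗[k] C)) :=
    Set.disjoint_left.mpr fun a haI haS => hdis a haS haI
  obtain ⟨Q', hQ'p, hIQ', hdisQ'⟩ := Ideal.exists_le_prime_disjoint I₀ S hdisj
  have hQ'leQ : Q' ≤ Q := by
    intro a haQ'
    by_contra haQ
    exact Set.disjoint_left.mp hdisQ' haQ' ⟨a, 1, haQ, hone_not_p', by simp⟩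
  have hcomapR : Q'.comap ιR = p' := by
    refine le_antisymm ?_ ?_
    · intro c hc
      by_contra hn
      exact Set.disjoint_left.mp hdisQ' hc ⟨1, c, hone_not_Q, hn, (one_mul _).symm⟩
    · refine le_trans (Ideal.le_comap_map) (Ideal.comap_mono ?_)
      exact le_trans le_sup_right hIQ'
  have hcomapL : Q'.comap ιL = q := by
    refine le_antisymm (Ideal.comap_mono hQ'leQ) ?_
    rw [← Ideal.map_le_iff_le_comap]
    exact le_trans le_sup_left hIQ'
  refine ⟨Q', hQ'p, lt_of_le_of_ne hQ'leQ ?_, hcomapR, hcomapL⟩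
  rintro rfl
  exact (ne_of_lt hlt) hcomapR.symm

end GD2

section GDPi

variable {k R : Type} [Field k] [CommRing R] [Algebra k R] {d : ℕ}

/-- Going down in a single tensor slot of `R^{⊗ d}`, keeping the other contractions fixed. -/
theorem pitensor_going_down
    (Q : Ideal (⨂[k] _ : Fin d, R)) (hQ : Q.IsPrime) (j : Fin d)
    (p' : Ideal R) (hp' : p'.IsPrime)
    (hlt : p' < Q.comap (PiTensorProduct.singleAlgHom (R := k) (A := fun _ : Fin d => R) j)) :
    ∃ Q' : Ideal (⨂[k] _ : Fin d, R), Q'.IsPrime ∧ Q' < Q ∧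
      Q'.comap (PiTensorProduct.singleAlgHom (R := k) (A := fun _ : Fin d => R) j) = p' ∧
      ∀ i, i ≠ j →
        Q'.comap (PiTensorProduct.singleAlgHom (R := k) (A := fun _ : Fin d => R) i)
          = Q.comap (PiTensorProduct.singleAlgHom (R := k) (A := fun _ : Fin d => R) i) := by
  classical
  have hsymmj : ∀ a : R, (psi k R j).symm (Algebra.TensorProduct.includeRight a)
      = PiTensorProduct.singleAlgHom (R := k) (A := fun _ : Fin d => R) j a := by
    intro a
    rw [AlgEquiv.symm_apply_eq, psi_single_self]
  have hsymmne : ∀ (i : Fin d) (hi : i ≠ j) (a : R),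
      (psi k R j).symm (Algebra.TensorProduct.includeLeft (S := k)
        (PiTensorProduct.singleAlgHom (R := k)
          (A := fun _ : {i : Fin d // i ≠ j} => R) ⟨i, hi⟩ a))
      = PiTensorProduct.singleAlgHom (R := k) (A := fun _ : Fin d => R) i a := by
    intro i hi a
    rw [AlgEquiv.symm_apply_eq, psi_single_ne]
  haveI hQTp : (Q.comap (psi k R j).symm.toAlgHom).IsPrime := hQ.comap _
  have hcomapT : (Q.comap (psi k R j).symm.toAlgHom).comap
      (Algebra.TensorProduct.includeRight :
        R →ₐ[k] ((⨂[k] _ : {i : Fin d // i ≠ j}, R) ⊗[k] R))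
      = Q.comap (PiTensorProduct.singleAlgHom (R := k) (A := fun _ : Fin d => R) j) := by
    ext a
    constructor
    · intro ha
      have h2 : (psi k R j).symm (Algebra.TensorProduct.includeRight a) ∈ Q := ha
      rw [hsymmj] at h2
      exact h2
    · intro ha
      have h2 : (psi k R j).symm (Algebra.TensorProduct.includeRight a) ∈ Q := by
        rw [hsymmj]; exact ha
      exact h2
  obtain ⟨QT', hQT'p, hQT'lt, hQT'R, hQT'L⟩ :=
    tensor_going_down (Q.comap (psi k R j).symm.toAlgHom) hQTp p' hp'
      (by rw [hcomapT]; exact hlt)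
  refine ⟨QT'.comap (psi k R j).toAlgHom, hQT'p.comap _, ?_, ?_, ?_⟩
  · have hle : QT'.comap (psi k R j).toAlgHom ≤ Q := by
      intro z hz
      have h1 : psi k R j z ∈ QT' := hz
      have h2 : psi k R j z ∈ Q.comap (psi k R j).symm.toAlgHom := le_of_lt hQT'lt h1
      have h3 : (psi k R j).symm (psi k R j z) ∈ Q := h2
      rwa [AlgEquiv.symm_apply_apply] at h3
    refine lt_of_le_of_ne hle ?_
    intro hEq
    refine (ne_of_lt hQT'lt) ?_
    ext z
    constructor
    · intro hz
      have h1 : (psi k R j).symm z ∈ QT'.comap (psi k R j).toAlgHom := by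
        show psi k R j ((psi k R j).symm z) ∈ QT'
        rwa [AlgEquiv.apply_symm_apply]
      rw [hEq] at h1
      exact h1
    · intro hz
      have h1 : (psi k R j).symm z ∈ Q := hz
      rw [← hEq] at h1
      have h2 : psi k R j ((psi k R j).symm z) ∈ QT' := h1
      rwa [AlgEquiv.apply_symm_apply] at h2
  · ext a
    constructor
    · intro ha
      have h1 : psi k R j (PiTensorProduct.singleAlgHom
          (R := k) (A := fun _ : Fin d => R) j a) ∈ QT' := ha
      rw [psi_single_self] at h1
      rw [← hQT'R]
      exact h1
    · intro ha
      have h1 : (Algebra.TensorProduct.includeRight :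
          R →ₐ[k] ((⨂[k] _ : {i : Fin d // i ≠ j}, R) ⊗[k] R)) a ∈ QT' := by
        rw [← Ideal.mem_comap, hQT'R]; exact ha
      show psi k R j (PiTensorProduct.singleAlgHom
          (R := k) (A := fun _ : Fin d => R) j a) ∈ QT'
      rwa [psi_single_self]
  · intro i hi
    ext a
    constructor
    · intro ha
      have h1 : psi k R j (PiTensorProduct.singleAlgHom
          (R := k) (A := fun _ : Fin d => R) i a) ∈ QT' := ha
      rw [psi_single_ne k R j hi] at h1
      have h2 : PiTensorProduct.singleAlgHom (R := k)
          (A := fun _ : {i : Fin d // i ≠ j} => R) ⟨i, hi⟩ a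
          ∈ QT'.comap (Algebra.TensorProduct.includeLeft :
            (⨂[k] _ : {i : Fin d // i ≠ j}, R) →ₐ[k] _) := h1
      rw [hQT'L] at h2
      have h3 : (psi k R j).symm (Algebra.TensorProduct.includeLeft (S := k)
          (PiTensorProduct.singleAlgHom (R := k)
            (A := fun _ : {i : Fin d // i ≠ j} => R) ⟨i, hi⟩ a)) ∈ Q := h2
      rwa [hsymmne i hi a] at h3
    · intro ha
      have h3 : (psi k R j).symm (Algebra.TensorProduct.includeLeft (S := k)
          (PiTensorProduct.singleAlgHom (R := k)
            (A := fun _ : {i : Fin d // i ≠ j} => R) ⟨i, hi⟩ a)) ∈ Q := by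
        rw [hsymmne i hi a]; exact ha
      have h2 : PiTensorProduct.singleAlgHom (R := k)
          (A := fun _ : {i : Fin d // i ≠ j} => R) ⟨i, hi⟩ a
          ∈ (Q.comap (psi k R j).symm.toAlgHom).comap
            (Algebra.TensorProduct.includeLeft :
              (⨂[k] _ : {i : Fin d // i ≠ j}, R) →ₐ[k] _) := h3
      rw [← hQT'L] at h2
      show psi k R j (PiTensorProduct.singleAlgHom
          (R := k) (A := fun _ : Fin d => R) i a) ∈ QT'
      rw [psi_single_ne k R j hi]
      exact h2

end GDPi

section Heights

variable {α : Type} [PartialOrder α]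

lemma height_succ_of_lt {x y : α} (h : x < y) {m : ℕ} (hm : (m : ℕ∞) ≤ Order.height x) :
    ((m + 1 : ℕ) : ℕ∞) ≤ Order.height y := by
  obtain ⟨p, hlast, hlen⟩ := Order.exists_series_of_le_height x hm
  have hrel : p.last < y := by rw [hlast]; exact h
  have hle := Order.length_le_height_last (p := p.snoc y hrel)
  rw [RelSeries.last_snoc] at hle
  have hlen2 : (p.snoc y hrel).length = m + 1 := by
    rw [RelSeries.snoc_length, hlen]
  rw [hlen2] at hle
  exact_mod_cast hle

lemma exists_lt_of_le_height {x : α} {m : ℕ} (hm : ((m + 1 : ℕ) : ℕ∞) ≤ Order.height x) :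
    ∃ y, y < x ∧ (m : ℕ∞) ≤ Order.height y := by
  rw [Order.height_eq_iSup_lt_height] at hm
  have hlt : (m : ℕ∞) < ⨆ y, ⨆ (_ : y < x), Order.height y + 1 := by
    refine lt_of_lt_of_le ?_ hm
    exact_mod_cast Nat.lt_succ_self m
  obtain ⟨y, hy⟩ := lt_iSup_iff.mp hlt
  obtain ⟨hyx, hy2⟩ := lt_iSup_iff.mp hy
  refine ⟨y, hyx, ?_⟩
  by_cases htop : Order.height y = ⊤
  · rw [htop]; exact le_top
  · exact (ENat.lt_add_one_iff htop).mp hy2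

end Heights

section Assemble

variable {k R : Type} [Field k] [CommRing R] [Algebra k R] {d : ℕ}

lemma height_ge_sum (N : ℕ) :
    ∀ (c : Fin d → ℕ) (Q : Ideal (⨂[k] _ : Fin d, R)) (hQ : Q.IsPrime),
      (∀ i, (c i : ℕ∞) ≤ Order.height
        (⟨Q.comap (PiTensorProduct.singleAlgHom (R := k) (A := fun _ : Fin d => R) i),
          hQ.comap _⟩ : PrimeSpectrum R)) →
      (∑ i, c i) = N →
      (N : ℕ∞) ≤ Order.height (⟨Q, hQ⟩ : PrimeSpectrum (⨂[k] _ : Fin d, R)) := by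
  induction N with
  | zero => intro c Q hQ hc hsum; simp
  | succ N ih =>
    intro c Q hQ hc hsum
    classical
    obtain ⟨j, hj⟩ : ∃ j, c j ≠ 0 := by
      by_contra h
      push_neg at h
      rw [Finset.sum_eq_zero (fun i _ => h i)] at hsum
      omega
    have hcj : ((c j - 1) + 1 : ℕ) = c j := Nat.succ_pred_eq_of_pos (Nat.pos_of_ne_zero hj)
    have h1 : (((c j - 1) + 1 : ℕ) : ℕ∞) ≤ Order.height
        (⟨Q.comap (PiTensorProduct.singleAlgHom (R := k) (A := fun _ : Fin d => R) j),
          hQ.comap _⟩ : PrimeSpectrum R) := by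
      rw [hcj]; exact hc j
    obtain ⟨y, hyx, hy⟩ := exists_lt_of_le_height h1
    have hylt : y.asIdeal
        < Q.comap (PiTensorProduct.singleAlgHom (R := k) (A := fun _ : Fin d => R) j) :=
      (PrimeSpectrum.asIdeal_lt_asIdeal _ _).mpr hyx
    obtain ⟨Q', hQ'p, hQ'lt, hQ'j, hQ'ne⟩ :=
      pitensor_going_down Q hQ j y.asIdeal y.isPrime hylt
    have hkey : (N : ℕ∞) ≤ Order.height (⟨Q', hQ'p⟩ : PrimeSpectrum (⨂[k] _ : Fin d, R)) := by
      refine ih (Function.update c j (c j - 1)) Q' hQ'p ?_ ?_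
      · intro i
        by_cases hij : i = j
        · subst hij
          rw [Function.update_self]
          have heq : (⟨Q'.comap (PiTensorProduct.singleAlgHom
                (R := k) (A := fun _ : Fin d => R) i), hQ'p.comap _⟩ : PrimeSpectrum R) = y :=
            PrimeSpectrum.ext hQ'j
          rw [heq]
          exact hy
        · have heq : (⟨Q'.comap (PiTensorProduct.singleAlgHom
                (R := k) (A := fun _ : Fin d => R) i), hQ'p.comap _⟩ : PrimeSpectrum R)
              = (⟨Q.comap (PiTensorProduct.singleAlgHom
                (R := k) (A := fun _ : Fin d => R) i), hQ.comap _⟩ : PrimeSpectrum R) :=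
            PrimeSpectrum.ext (hQ'ne i hij)
          rw [Function.update_of_ne hij, heq]
          exact hc i
      · rw [Finset.sum_update_of_mem (Finset.mem_univ j)]
        rw [← Finset.add_sum_erase _ c (Finset.mem_univ j), Finset.erase_eq] at hsum
        omega
    have hstep := height_succ_of_lt
      (x := (⟨Q', hQ'p⟩ : PrimeSpectrum (⨂[k] _ : Fin d, R)))
      (y := (⟨Q, hQ⟩ : PrimeSpectrum (⨂[k] _ : Fin d, R)))
      ((PrimeSpectrum.asIdeal_lt_asIdeal _ _).mp hQ'lt) hkey
    exact_mod_cast hstep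

end Assemble

end AuxCodim



/-- Let `W` be a finite étale scheme of degree `d` over `k` and `(X, Z)` a pair
with `Z ⊆ X` closed of codimension `≥ n`.  Then `Z^W` has codimension `≥ nd` in the scheme of
`W`-points `X^W`.  Affine form, after splitting `W` (any étale scheme splits over a separable
closure, `X^W` becoming the `d`-fold product `X^d` and `Z^W` becoming `Z^d`): `X = Spec R`,
`X^d = Spec (R^{⊗d})`, `Z = V(I)`, `Z^d = V(Σᵢ ιᵢ(I))`, and codimension is the height of
minimal primes. -/
theorem codim_of_power_of_pair
    (k R : Type) [Field k] [CommRing R] [IsDomain R] [Algebra k R] [Algebra.FiniteType k R]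
    (d n : ℕ) (I : Ideal R) (hIne : I ≠ ⊤)
    (hI : ∀ P, ∀ hP : P ∈ I.minimalPrimes,
      (n : ℕ∞) ≤ Order.height (⟨P, hP.1.1⟩ : PrimeSpectrum R)) :
    ∀ Q, ∀ hQ : Q ∈ (⨆ i : Fin d,
        Ideal.map (PiTensorProduct.singleAlgHom (R := k) (A := fun _ : Fin d => R) i) I).minimalPrimes,
      (n * d : ℕ∞) ≤
        Order.height (⟨Q, hQ.1.1⟩ : PrimeSpectrum (PiTensorProduct k (fun _ : Fin d => R))) := by
  intro Q hQ
  have hQp : Q.IsPrime := hQ.1.1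
  have hJle : ∀ i : Fin d,
      Ideal.map (PiTensorProduct.singleAlgHom (R := k) (A := fun _ : Fin d => R) i) I ≤ Q :=
    fun i => le_trans (le_iSup (fun i : Fin d =>
      Ideal.map (PiTensorProduct.singleAlgHom (R := k) (A := fun _ : Fin d => R) i) I) i) hQ.1.2
  have hmin : ∀ i : Fin d,
      Q.comap (PiTensorProduct.singleAlgHom (R := k) (A := fun _ : Fin d => R) i)
        ∈ I.minimalPrimes := by
    intro i
    refine ⟨⟨hQp.comap _, ?_⟩, ?_⟩
    · rw [← Ideal.map_le_iff_le_comap]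
      exact hJle i
    · rintro p'' ⟨hp''p, hp''I⟩ hp''le
      by_contra hnot
      have hlt : p''
          < Q.comap (PiTensorProduct.singleAlgHom (R := k) (A := fun _ : Fin d => R) i) :=
        lt_of_le_of_ne hp''le (by rintro rfl; exact hnot le_rfl)
      obtain ⟨Q', hQ'p, hQ'lt, hQ'i, hQ'ne⟩ := pitensor_going_down Q hQp i p'' hp''p hlt
      have hJQ' : (⨆ i : Fin d,
          Ideal.map (PiTensorProduct.singleAlgHom (R := k) (A := fun _ : Fin d => R) i) I)
          ≤ Q' := by
        refine iSup_le fun i' => ?_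
        rw [Ideal.map_le_iff_le_comap]
        by_cases h : i' = i
        · subst h
          rw [hQ'i]
          exact hp''I
        · rw [hQ'ne i' h, ← Ideal.map_le_iff_le_comap]
          exact hJle i'
      exact absurd (hQ.2 ⟨hQ'p, hJQ'⟩ (le_of_lt hQ'lt)) (not_le_of_gt hQ'lt)
  have hn : ∀ i : Fin d, ((fun _ : Fin d => n) i : ℕ∞) ≤ Order.height
      (⟨Q.comap (PiTensorProduct.singleAlgHom (R := k) (A := fun _ : Fin d => R) i),
        hQp.comap _⟩ : PrimeSpectrum R) := by
    intro i
    exact hI _ (hmin i)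
  have hsum : (∑ _i : Fin d, n) = d * n := by
    rw [Finset.sum_const, Finset.card_univ, Fintype.card_fin, smul_eq_mul]
  have hmain := height_ge_sum (k := k) (R := R) (d * n) (fun _ => n) Q hQp hn hsum
  have hcast : ((d * n : ℕ) : ℕ∞) = (n : ℕ∞) * (d : ℕ∞) := by
    push_cast
    ring
  rw [hcast] at hmain
  exact hmain
end
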